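/- (Equilateral projective triangles) Suppose U, V, W are nonzero vectors with a_U, a_V, a_W all nonzero, with all three quantities a_U·a_V − b_{UV}², a_U·a_W − b_{UW}², a_V·a_W − b_{VW}² nonzero, whose projective triangle is equilateral with common nonzero projective quadrance q_u = q_v = q_w = q and common projective spread S_u = S_v = S_w = S, and suppose 1 − S·q ≠ 0. Then (1 − S·q)² = 4(1 − S)(1 − q). -/

import Mathlib

/-- The projective quadrance between the projective points `[U]` and `[V]`. -/
def projQuadrance {F : Type*} [Field F] {M : Type*} [AddCommGroup M] [Module F M]
    (B : LinearMap.BilinForm F M) (U V : M) : F :=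
  1 - (B U V) ^ 2 / (B U U * B V V)

/-- The projective spread between the projective lines `WU` and `WV`
(the spread at the vertex `[W]`). -/
def projSpread {F : Type*} [Field F] {M : Type*} [AddCommGroup M] [Module F M]
    (B : LinearMap.BilinForm F M) (W U V : M) : F :=
  1 - (B W W * B U V - B U W * B V W) ^ 2 /
      ((B U U * B W W - (B U W) ^ 2) * (B V V * B W W - (B V W) ^ 2))

theorem equilateral_projective_triangle
    {F : Type*} [Field F] (hchar : (2 : F) ≠ 0)
    {M : Type*} [AddCommGroup M] [Module F M]
    (B : LinearMap.BilinForm F M) (hsym : ∀ x y : M, B x y = B y x)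
    (U V W : M) (hU : U ≠ 0) (hV : V ≠ 0) (hW : W ≠ 0)
    (haU : B U U ≠ 0) (haV : B V V ≠ 0) (haW : B W W ≠ 0)
    (hdUV : B U U * B V V - (B U V) ^ 2 ≠ 0)
    (hdUW : B U U * B W W - (B U W) ^ 2 ≠ 0)
    (hdVW : B V V * B W W - (B V W) ^ 2 ≠ 0)
    (q S : F)
    (hqu : projQuadrance B V W = q) (hqv : projQuadrance B U W = q)
    (hqw : projQuadrance B U V = q) (hq : q ≠ 0)
    (hSu : projSpread B U V W = S) (hSv : projSpread B V U W = S)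
    (hSw : projSpread B W U V = S)
    (hSq : 1 - S * q ≠ 0) :
    (1 - S * q) ^ 2 = 4 * (1 - S) * (1 - q) := by
  simp only [projQuadrance, projSpread] at hqu hqv hqw hSw
  set a := B U U with ha
  set b := B V V with hb
  set c := B W W with hc
  set x := B U V with hx
  set y := B U W with hy
  set z := B V W with hz
  have e1 : x ^ 2 = a * b * (1 - q) := by
    field_simp at hqw
    linear_combination -hqw
  have e2 : y ^ 2 = a * c * (1 - q) := by
    field_simp at hqv
    linear_combination -hqv
  have e3 : z ^ 2 = b * c * (1 - q) := by
    field_simp at hqu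
    linear_combination -hqu
  have e4 : (c * x - y * z) ^ 2 = (1 - S) * ((a * c - y ^ 2) * (b * c - z ^ 2)) := by
    have hd : (a * c - y ^ 2) * (b * c - z ^ 2) ≠ 0 := mul_ne_zero hdUW hdVW
    field_simp at hSw
    have hd' : (c * a - y ^ 2) * (c * b - z ^ 2) ≠ 0 := by rw [mul_comm c a, mul_comm c b]; exact hd
    have key := div_mul_cancel₀ ((c * x - y * z) ^ 2) hd'
    linear_combination (-((a * c - y ^ 2) * (b * c - z ^ 2))) * hSw - key
  have key1 : 2 * (c * (x * y * z)) = a * b * c ^ 2 * (2 - 3 * q + S * q ^ 2) := by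
    linear_combination -e4 + c ^ 2 * e1 + ((1 - S) * b * c + S * z ^ 2) * e2 +
      (a * c * (1 - q) + (1 - S) * a * c * q) * e3
  have key2 : c ^ 2 * ((a * b * c) ^ 2 * ((2 - 3 * q + S * q ^ 2) ^ 2 - 4 * (1 - q) ^ 3)) = 0 := by
    linear_combination (-(2 * (c * (x * y * z)) + a * b * c ^ 2 * (2 - 3 * q + S * q ^ 2))) * key1 +
      4 * c ^ 2 * (y ^ 2 * z ^ 2) * e1 + 4 * c ^ 2 * a * b * (1 - q) * z ^ 2 * e2 +
      4 * c ^ 2 * a * b * (1 - q) * a * c * (1 - q) * e3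
  have key3 : (2 - 3 * q + S * q ^ 2) ^ 2 - 4 * (1 - q) ^ 3 = 0 := by
    have h1 : c ^ 2 ≠ 0 := pow_ne_zero _ haW
    have h2 : (a * b * c) ^ 2 ≠ 0 := pow_ne_zero _ (by simp [haU, haV, haW])
    have := (mul_eq_zero.mp key2).resolve_left h1
    exact (mul_eq_zero.mp this).resolve_left h2
  have key4 : q ^ 2 * ((1 - S * q) ^ 2 - 4 * (1 - S) * (1 - q)) = 0 := by
    linear_combination key3
  have := (mul_eq_zero.mp key4).resolve_left (pow_ne_zero _ hq)
  linear_combination this
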